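/- Let 1 ≤ k, let p ≥ k, let C̄ > 0, and let h ∈ ℝ^p satisfy |h_1| ≥ |h_2| ≥ … ≥ |h_p| and Σ_{i=1}^{k} |h_i| ≥ C̄·Σ_{i=k+1}^{p} |h_i|. Then Σ_{i=k+1}^{p} h_i² ≤ (1/C̄)·Σ_{i=1}^{k} h_i². -/

import Mathlib

/-- **Tail `ℓ₂` mass bound in the cone.**
If the coordinates of `h ∈ ℝ^p` are sorted by decreasing magnitude and
`Σ_{i ≤ k} |h_i| ≥ C̄ Σ_{i > k} |h_i|`, then
`Σ_{i > k} h_i² ≤ (1/C̄) Σ_{i ≤ k} h_i²`. -/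
theorem tail_l2_bound
    (p k : ℕ) (hk : 1 ≤ k) (hkp : k ≤ p)
    (Cbar : ℝ) (hCbar : 0 < Cbar)
    (h : Fin p → ℝ)
    (hsorted : ∀ i j : Fin p, i ≤ j → |h j| ≤ |h i|)
    (hcone : Cbar * (∑ j : Fin p, if k ≤ (j : ℕ) then |h j| else 0) ≤
        ∑ j : Fin p, if (j : ℕ) < k then |h j| else 0) :
    (∑ j : Fin p, if k ≤ (j : ℕ) then (h j) ^ 2 else 0) ≤
      (1 / Cbar) * ∑ j : Fin p, if (j : ℕ) < k then (h j) ^ 2 else 0 := by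
  classical
  set S1 : Finset (Fin p) := Finset.univ.filter (fun j => (j : ℕ) < k) with hS1
  set S2 : Finset (Fin p) := Finset.univ.filter (fun j => k ≤ (j : ℕ)) with hS2
  have e1 : (∑ j : Fin p, if (j : ℕ) < k then |h j| else 0) = ∑ j ∈ S1, |h j| :=
    (Finset.sum_filter _ _).symm
  have e2 : (∑ j : Fin p, if k ≤ (j : ℕ) then |h j| else 0) = ∑ j ∈ S2, |h j| :=
    (Finset.sum_filter _ _).symm
  have e3 : (∑ j : Fin p, if (j : ℕ) < k then (h j) ^ 2 else 0) = ∑ j ∈ S1, (h j) ^ 2 :=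
    (Finset.sum_filter _ _).symm
  have e4 : (∑ j : Fin p, if k ≤ (j : ℕ) then (h j) ^ 2 else 0) = ∑ j ∈ S2, (h j) ^ 2 :=
    (Finset.sum_filter _ _).symm
  rw [e3, e4]
  rw [e1, e2] at hcone
  set A : ℝ := ∑ j ∈ S1, |h j| with hA
  set B : ℝ := ∑ j ∈ S2, |h j| with hB
  have hAnn : 0 ≤ A := Finset.sum_nonneg fun _ _ => abs_nonneg _
  have hBnn : 0 ≤ B := Finset.sum_nonneg fun _ _ => abs_nonneg _
  have hcard : (S1.card : ℝ) = k := by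
    have h0 : S1.card = k := by
      rw [hS1, Finset.card_filter,
        Fin.sum_univ_eq_sum_range (fun i => if i < k then 1 else 0),
        ← Finset.card_filter]
      have : (Finset.range p).filter (fun i => i < k) = Finset.range k := by
        ext i; simp only [Finset.mem_filter, Finset.mem_range]; omega
      rw [this, Finset.card_range]
    rw [h0]
  have hkpos : (0 : ℝ) < k := by exact_mod_cast hk
  -- each tail coordinate is at most A / k
  have hle : ∀ j ∈ S2, |h j| ≤ A / k := by
    intro j hj
    have hjk : k ≤ (j : ℕ) := by simpa [hS2] using hj
    have : (k : ℝ) * |h j| ≤ A := by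
      have : ∀ i ∈ S1, |h j| ≤ |h i| := by
        intro i hi
        have hik : (i : ℕ) < k := by simpa [hS1] using hi
        exact hsorted i j (by omega)
      calc (k : ℝ) * |h j| = ∑ _i ∈ S1, |h j| := by rw [Finset.sum_const, ← hcard]; ring
        _ ≤ A := Finset.sum_le_sum this
    rw [le_div_iff₀ hkpos]
    linarith
  -- tail sum of squares bound
  have step1 : (∑ j ∈ S2, (h j) ^ 2) ≤ (A / k) * B := by
    rw [hB, Finset.mul_sum]
    apply Finset.sum_le_sum
    intro j hj
    have h1 : |h j| ≤ A / k := hle j hj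
    nlinarith [sq_abs (h j), abs_nonneg (h j)]
  have step2 : B ≤ A / Cbar := by
    rw [le_div_iff₀ hCbar]; linarith [hcone]
  have step3 : A ^ 2 ≤ (k : ℝ) * ∑ j ∈ S1, (h j) ^ 2 := by
    have := sq_sum_le_card_mul_sum_sq (s := S1) (f := fun j => |h j|)
    simpa [hcard, sq_abs] using this
  have hAk : 0 ≤ A / k := div_nonneg hAnn hkpos.le
  calc (∑ j ∈ S2, (h j) ^ 2) ≤ (A / k) * B := step1
    _ ≤ (A / k) * (A / Cbar) := mul_le_mul_of_nonneg_left step2 hAk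
    _ = A ^ 2 / (k * Cbar) := by ring
    _ ≤ ((k : ℝ) * ∑ j ∈ S1, (h j) ^ 2) / (k * Cbar) := by
        apply div_le_div_of_nonneg_right step3 (by positivity) |>.trans_eq rfl
    _ = (1 / Cbar) * ∑ j ∈ S1, (h j) ^ 2 := by
        field_simp
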